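/- Let R be a ring, let F, G : ModuleCat R ⥤ ModuleCat R be additive functors such that G preserves monomorphisms, and let α : F ⟶ G be a natural transformation. Let M be an R-module and let U, N be submodules of M such that the component of α at the quotient M ⧸ U is zero. Then the component of α at the quotient of N by the submodule U ⊓ N (that is, at N ⧸ ((U ⊓ N).comap N.subtype), regarded as an object of ModuleCat R) is zero. -/

import Mathlib

open CategoryTheory

universe u

/-- If a natural transformation `α : F ⟶ G` between additive endofunctors of `ModuleCat R`,
with `G` preserving monomorphisms, annihilates the quotient `M ⧸ U`, then it annihilates
`N ⧸ (U ⊓ N)` for any submodule `N` of `M` (since the latter embeds into the former by the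
isomorphism theorem). -/
theorem natTrans_app_quotient_inf_sub_zero (R : Type u) [Ring R]
    (F G : ModuleCat.{u} R ⥤ ModuleCat.{u} R) [F.Additive] [G.Additive]
    [G.PreservesMonomorphisms] (α : F ⟶ G)
    (M : Type u) [AddCommGroup M] [Module R M] (U N : Submodule R M)
    (h : α.app (ModuleCat.of R (M ⧸ U)) = 0) :
    α.app (ModuleCat.of R (N ⧸ (Submodule.comap N.subtype (U ⊓ N)))) = 0 := by
  set K := Submodule.comap N.subtype (U ⊓ N)
  have hle : K ≤ Submodule.comap N.subtype U := fun x hx => hx.1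
  let f0 : (N ⧸ K) →ₗ[R] (M ⧸ U) := Submodule.mapQ K U N.subtype hle
  have hinj : Function.Injective f0 := by
    rw [← LinearMap.ker_eq_bot]
    apply Submodule.ker_liftQ_eq_bot
    intro x hx
    have : (N.subtype x : M) ∈ U := by
      simpa [Submodule.Quotient.mk_eq_zero] using hx
    exact ⟨this, x.2⟩
  let f : ModuleCat.of R (N ⧸ K) ⟶ ModuleCat.of R (M ⧸ U) := ModuleCat.ofHom f0
  have hm : Mono f := (ModuleCat.mono_iff_injective f).mpr hinj
  have hGm : Mono (G.map f) := G.map_mono f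
  have hnat := α.naturality f
  have : α.app (ModuleCat.of R (N ⧸ K)) ≫ G.map f = 0 ≫ G.map f := by
    rw [← hnat, h, Limits.comp_zero, Limits.zero_comp]
  exact (cancel_mono (G.map f)).mp this
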